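/- Let Δ be the induced subgraph of Γ₀ on the vertex set {a,b,c,d,q,h} (so Δ has edges ab, bc, cd, da, qa, qb, qc, qd, ha, hb, hd). The group homomorphism ψ : A(Δ) → A(Γ₁) determined by sending q to the product ef and sending each of a, b, c, d, h to the generator of the same name is injective, and its image is the subgroup of A(Γ₁) generated by {a, b, c, d, ef, h}. -/

import Mathlib

open scoped commutatorElement

/-- The defining relators of the right-angled Artin group on a simple graph `G`:
the commutators of the generators corresponding to adjacent vertices. -/
def raagRels {V : Type*} (G : SimpleGraph V) : Set (FreeGroup V) :=
  {r | ∃ u v : V, G.Adj u v ∧ r = ⁅FreeGroup.of u, FreeGroup.of v⁆}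

/-- The right-angled Artin group on a simple graph `G`. -/
abbrev RAAG {V : Type*} (G : SimpleGraph V) : Type _ := PresentedGroup (raagRels G)

/-- The generator of the right-angled Artin group corresponding to a vertex. -/
def gen {V : Type*} (G : SimpleGraph V) (v : V) : RAAG G := PresentedGroup.of v

/-- Vertices of the graph Γ₁. -/
inductive V1 : Type | a | b | c | d | e | f | g | h
deriving DecidableEq

/-- The graph Γ₁ with edges ab, bc, cd, da, ea, eb, ec, ed, fa, fb, fc, fd, ef,
ga, gb, gc, ge, ha, hb, hd, hf. -/
def G1 : SimpleGraph V1 := SimpleGraph.fromRel (fun u v => (u, v) ∈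
  ([(.a,.b),(.b,.c),(.c,.d),(.d,.a),
    (.e,.a),(.e,.b),(.e,.c),(.e,.d),
    (.f,.a),(.f,.b),(.f,.c),(.f,.d),(.e,.f),
    (.g,.a),(.g,.b),(.g,.c),(.g,.e),
    (.h,.a),(.h,.b),(.h,.d),(.h,.f)] : List (V1 × V1)))

/-- Vertices of the graph Δ, the induced subgraph of Γ₀ on {a,b,c,d,q,h}. -/
inductive VD : Type | a | b | c | d | q | h
deriving DecidableEq

/-- The graph Δ with edges ab, bc, cd, da, qa, qb, qc, qd, ha, hb, hd. -/
def GD : SimpleGraph VD := SimpleGraph.fromRel (fun u v => (u, v) ∈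
  ([(.a,.b),(.b,.c),(.c,.d),(.d,.a),
    (.q,.a),(.q,.b),(.q,.c),(.q,.d),
    (.h,.a),(.h,.b),(.h,.d)] : List (VD × VD)))

/-- Adjacent generators commute in a RAAG. -/
lemma gen_comm {V : Type*} (G : SimpleGraph V) {u v : V} (h : G.Adj u v) :
    Commute (gen G u) (gen G v) := by
  rw [← commutatorElement_eq_one_iff_commute]
  have hr : (⁅FreeGroup.of u, FreeGroup.of v⁆ : FreeGroup V) ∈ raagRels G := ⟨u, v, h, rfl⟩
  have : (⁅gen G u, gen G v⁆ : RAAG G)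
      = PresentedGroup.mk (raagRels G) ⁅FreeGroup.of u, FreeGroup.of v⁆ := by
    simp [gen, PresentedGroup.of, commutatorElement_def]
  rw [this]
  exact (QuotientGroup.eq_one_iff _).mpr (Subgroup.subset_normalClosure hr)

/-- Images of the generators of Δ in A(Γ₁). -/
def ψf : VD → RAAG G1
  | .a => gen G1 .a
  | .b => gen G1 .b
  | .c => gen G1 .c
  | .d => gen G1 .d
  | .q => gen G1 .e * gen G1 .f
  | .h => gen G1 .h

/-- Images of the generators of Γ₁ in A(Δ) (the retraction). -/
def ρf : V1 → RAAG GD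
  | .a => gen GD .a
  | .b => gen GD .b
  | .c => gen GD .c
  | .d => gen GD .d
  | .e => gen GD .q
  | .f => 1
  | .g => gen GD .q
  | .h => gen GD .h

lemma adjG1 {u v : V1} (h : (u, v) ∈
    ([(.a,.b),(.b,.c),(.c,.d),(.d,.a),
    (.e,.a),(.e,.b),(.e,.c),(.e,.d),
    (.f,.a),(.f,.b),(.f,.c),(.f,.d),(.e,.f),
    (.g,.a),(.g,.b),(.g,.c),(.g,.e),
    (.h,.a),(.h,.b),(.h,.d),(.h,.f)] : List (V1 × V1))) : G1.Adj u v := by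
  rw [G1, SimpleGraph.fromRel_adj]
  fin_cases h <;> exact ⟨by decide, Or.inl (by decide)⟩

lemma adjGD {u v : VD} (h : (u, v) ∈
    ([(.a,.b),(.b,.c),(.c,.d),(.d,.a),
    (.q,.a),(.q,.b),(.q,.c),(.q,.d),
    (.h,.a),(.h,.b),(.h,.d)] : List (VD × VD))) : GD.Adj u v := by
  rw [GD, SimpleGraph.fromRel_adj]
  fin_cases h <;> exact ⟨by decide, Or.inl (by decide)⟩

lemma ψf_comm {u v : VD} (h : GD.Adj u v) : Commute (ψf u) (ψf v) := by
  rw [GD, SimpleGraph.fromRel_adj] at h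
  obtain ⟨-, h | h⟩ := h
  all_goals {
    fin_cases h <;> simp only [ψf] <;>
    first
      | exact gen_comm G1 (adjG1 (by decide))
      | exact (gen_comm G1 (adjG1 (by decide))).symm
      | exact ((gen_comm G1 (adjG1 (by decide))).mul_left (gen_comm G1 (adjG1 (by decide))))
      | exact ((gen_comm G1 (adjG1 (by decide))).mul_left (gen_comm G1 (adjG1 (by decide)))).symm
  }

lemma ρf_comm {u v : V1} (h : G1.Adj u v) : Commute (ρf u) (ρf v) := by
  rw [G1, SimpleGraph.fromRel_adj] at h
  obtain ⟨-, h | h⟩ := h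
  all_goals {
    fin_cases h <;> simp only [ρf] <;>
    first
      | exact Commute.one_left _
      | exact Commute.one_right _
      | exact Commute.refl _
      | exact gen_comm GD (adjGD (by decide))
      | exact (gen_comm GD (adjGD (by decide))).symm
  }

lemma rels_lift {V : Type*} {H : Type*} [Group H] {G : SimpleGraph V} (f : V → H)
    (hf : ∀ u v : V, G.Adj u v → Commute (f u) (f v)) :
    ∀ r ∈ raagRels G, FreeGroup.lift f r = 1 := by
  rintro r ⟨u, v, huv, rfl⟩
  simp only [map_commutatorElement, FreeGroup.lift_apply_of]
  exact commutatorElement_eq_one_iff_commute.mpr (hf u v huv)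

/-- There is a (well-defined) group homomorphism `ψ : A(Δ) → A(Γ₁)` sending `q` to the
product `ef` and every other generator to the generator of the same name; it is
injective, and its image is the subgroup of `A(Γ₁)` generated by `{a, b, c, d, ef, h}`. -/
theorem raag_GD_embeds_in_raag_G1 :
    ∃ ψ : RAAG GD →* RAAG G1,
      ψ (gen GD VD.q) = gen G1 V1.e * gen G1 V1.f ∧
      ψ (gen GD VD.a) = gen G1 V1.a ∧
      ψ (gen GD VD.b) = gen G1 V1.b ∧
      ψ (gen GD VD.c) = gen G1 V1.c ∧
      ψ (gen GD VD.d) = gen G1 V1.d ∧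
      ψ (gen GD VD.h) = gen G1 V1.h ∧
      Function.Injective ψ ∧
      ψ.range = Subgroup.closure
        ({gen G1 V1.a, gen G1 V1.b, gen G1 V1.c, gen G1 V1.d,
          gen G1 V1.e * gen G1 V1.f, gen G1 V1.h} : Set (RAAG G1)) := by
  have hψ : ∀ r ∈ raagRels GD, FreeGroup.lift ψf r = 1 :=
    rels_lift ψf (fun u v h => ψf_comm h)
  have hρ : ∀ r ∈ raagRels G1, FreeGroup.lift ρf r = 1 :=
    rels_lift ρf (fun u v h => ρf_comm h)
  refine ⟨PresentedGroup.toGroup hψ, PresentedGroup.toGroup.of hψ,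
    PresentedGroup.toGroup.of hψ, PresentedGroup.toGroup.of hψ,
    PresentedGroup.toGroup.of hψ, PresentedGroup.toGroup.of hψ,
    PresentedGroup.toGroup.of hψ, ?_, ?_⟩
  · set ψ := PresentedGroup.toGroup hψ
    set ρ := PresentedGroup.toGroup hρ
    have hcomp : ρ.comp ψ = MonoidHom.id _ := by
      apply PresentedGroup.ext
      intro x
      cases x <;>
        simp [ψ, ρ, MonoidHom.comp_apply, PresentedGroup.toGroup.of, ψf, ρf, gen,
          map_mul]
    intro x y hxy
    have := congrArg ρ hxy
    calc x = (ρ.comp ψ) x := by rw [hcomp]; rfl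
    _ = (ρ.comp ψ) y := this
    _ = y := by rw [hcomp]; rfl
  · set ψ := PresentedGroup.toGroup hψ with hψdef
    have h1 : ψ '' Set.range (PresentedGroup.of : VD → RAAG GD) =
        ({gen G1 V1.a, gen G1 V1.b, gen G1 V1.c, gen G1 V1.d,
          gen G1 V1.e * gen G1 V1.f, gen G1 V1.h} : Set (RAAG G1)) := by
      rw [← Set.range_comp]
      ext x
      constructor
      · rintro ⟨v, rfl⟩
        cases v <;> simp [ψ, Function.comp, PresentedGroup.toGroup.of, ψf, gen]
      · intro hx
        rcases hx with rfl | rfl | rfl | rfl | rfl | rfl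
        · exact ⟨VD.a, PresentedGroup.toGroup.of hψ⟩
        · exact ⟨VD.b, PresentedGroup.toGroup.of hψ⟩
        · exact ⟨VD.c, PresentedGroup.toGroup.of hψ⟩
        · exact ⟨VD.d, PresentedGroup.toGroup.of hψ⟩
        · exact ⟨VD.q, PresentedGroup.toGroup.of hψ⟩
        · exact ⟨VD.h, PresentedGroup.toGroup.of hψ⟩
    calc ψ.range = Subgroup.map ψ ⊤ := ψ.range_eq_map
    _ = Subgroup.map ψ (Subgroup.closure (Set.range PresentedGroup.of)) := by
        rw [PresentedGroup.closure_range_of]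
    _ = Subgroup.closure (ψ '' Set.range PresentedGroup.of) :=
        (MonoidHom.map_closure ψ _)
    _ = _ := by rw [h1]
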